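/- Let n ≥ 2 be an integer and let x, x', y, y' ∈ ZMod n with Z := d(y', y). If d(x', y') + d(y', y) + d(y, x) = d(x', x) (i.e., the cyclic order of the four points is x', y', y, x) and 2Z ≥ n, then 2·d(y, x) + 2·d(x', y') + f(x, x') ≥ ⌊n/2⌋·⌊(n−1)/2⌋ + n − 1 − 2Z + ⌊(2Z − n + 2)²/4⌋. -/
import Mathlib


/-- `C2 x` is the binomial-type expression `x(x-1)/2`. -/
def C2 (x : ℤ) : ℤ := x * (x - 1) / 2

/-- `dz x y` is the least nonnegative residue of `y - x` modulo `n`. -/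
def dz {n : ℕ} (x y : ZMod n) : ℕ := (y - x).val

/-- `fz x y = C(d(x,y),2) + C(n - d(x,y),2)` for `x y : ZMod n`. -/
def fz {n : ℕ} (x y : ZMod n) : ℤ := C2 (dz x y) + C2 ((n : ℤ) - dz x y)

lemma c2_mul (m : ℤ) : 2 * C2 m = m * (m - 1) := by
  have he : Even (m * (m - 1)) := by
    have := Int.even_mul_succ_self (m - 1)
    simpa [mul_comm, sub_add_cancel] using this
  have h2 : (2 : ℤ) ∣ m * (m - 1) := he.two_dvd
  unfold C2
  rw [Int.mul_ediv_cancel' h2]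

lemma key (n Z D : ℤ) (hn : 2 ≤ n) (hZD : Z ≤ D) (hD : D ≤ n - 1) (hbig : n ≤ 2*Z) :
    n/2 * ((n-1)/2) + n - 1 - 2*Z + (2*Z - n + 2)^2/4
      ≤ 2*(D - Z) + (D*(D-1)/2 + (n-D)*((n-D)-1)/2) := by
  have hD2 : 2 * (D*(D-1)/2) = D*(D-1) := by
    have := c2_mul D; unfold C2 at this; linarith
  have hnD2 : 2 * ((n-D)*((n-D)-1)/2) = (n-D)*((n-D)-1) := by
    have := c2_mul (n - D); unfold C2 at this; linarith
  rcases Int.even_or_odd n with ⟨p, hp⟩ | ⟨p, hp⟩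
  · -- n = p + p
    subst hp
    have h1 : (p + p) / 2 = p := by omega
    have h2 : (p + p - 1) / 2 = p - 1 := by omega
    have h3 : (2*Z - (p + p) + 2)^2 / 4 = (Z - p + 1)^2 := by
      have h4 : (2*Z - (p + p) + 2)^2 = 4 * (Z - p + 1)^2 := by ring
      rw [h4, Int.mul_ediv_cancel_left _ (by norm_num)]
    rw [h1, h2, h3]
    nlinarith [sq_nonneg (D - Z), sq_nonneg (D + Z - 2*p + 1), hD2, hnD2]
  · -- n = 2p+1
    subst hp
    have h1 : (2*p + 1) / 2 = p := by omega
    have h2 : (2*p + 1 - 1) / 2 = p := by omega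
    have h3 : (2*Z - (2*p + 1) + 2)^2 / 4 = (Z - p)^2 + (Z - p) := by
      have h4 : (2*Z - (2*p + 1) + 2)^2 = 4 * ((Z - p)^2 + (Z - p)) + 1 := by ring
      omega
    rw [h1, h2, h3]
    nlinarith [sq_nonneg (D - Z), sq_nonneg (D + Z - 2*p), hD2, hnD2]

theorem stmt_7 (n : ℕ) (hn : 2 ≤ n) (x x' y y' : ZMod n) (Z : ℕ) (hZ : Z = dz y' y)
    (horder : dz x' y' + dz y' y + dz y x = dz x' x) (hbig : n ≤ 2 * Z) :
    ((n / 2 : ℕ) : ℤ) * (((n - 1) / 2 : ℕ) : ℤ) + n - 1 - 2 * Z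
      + (2 * (Z : ℤ) - n + 2) ^ 2 / 4 ≤
      2 * (dz y x : ℤ) + 2 * (dz x' y' : ℤ) + fz x x' := by
  haveI : NeZero n := ⟨by omega⟩
  set a := dz x' y' with ha
  set b := dz y x with hb
  set D := dz x' x with hDdef
  have hDlt : D < n := ZMod.val_lt _
  have hsum : a + Z + b = D := by rw [hZ]; exact horder
  have hZle : Z ≤ D := by omega
  have hne : x' - x ≠ 0 := by
    intro h
    have : dz x' x = 0 := by
      unfold dz
      rw [show x - x' = -(x' - x) by ring, h]; simp
    omega
  have hdxx' : dz x x' = n - D := by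
    unfold dz at *
    rw [show x' - x = -(x - x') by ring, ZMod.neg_val]
    have : x - x' ≠ 0 := by
      intro h; apply hne; rw [show x' - x = -(x - x') by ring, h]; simp
    simp [this]
    rw [hDdef]
  have hfz : fz x x' = C2 ((n : ℤ) - D) + C2 (D : ℤ) := by
    unfold fz
    rw [hdxx']
    have h1 : ((n - D : ℕ) : ℤ) = (n : ℤ) - D := by
      have := hDlt; push_cast [Nat.cast_sub (le_of_lt hDlt)]; ring
    rw [h1]
    have h2 : (n : ℤ) - ((n : ℤ) - D) = (D : ℤ) := by ring
    rw [h2]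
  have hkey := key n Z D (by exact_mod_cast hn) (by exact_mod_cast hZle)
    (by have := hDlt; omega) (by exact_mod_cast hbig)
  have hC2D : C2 (D : ℤ) = (D : ℤ) * ((D : ℤ) - 1) / 2 := rfl
  have hC2nD : C2 ((n : ℤ) - D) = ((n : ℤ) - D) * (((n : ℤ) - D) - 1) / 2 := rfl
  have hcast1 : ((n / 2 : ℕ) : ℤ) = (n : ℤ) / 2 := by omega
  have hcast2 : (((n - 1) / 2 : ℕ) : ℤ) = ((n : ℤ) - 1) / 2 := by omega
  rw [hfz, hC2D, hC2nD, hcast1, hcast2]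
  have hab : 2 * (b : ℤ) + 2 * (a : ℤ) = 2 * ((D : ℤ) - Z) := by
    have : (a : ℤ) + Z + b = D := by exact_mod_cast hsum
    linarith
  linarith [hkey, hab.ge]
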